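/- Let X be an F₂-valued random variable, Z a random variable with values in a finite set, and (S1,S2) a pair of {0,1}-valued random variables with the pair (S1,S2) independent of (X,Z) and P(S2=1) > 0. Define Y1 = S1·X and Y2 = S2·X. Then H[Y1 | (Z,S1,S2)] ≤ (P(S1=1 or S2=1)/P(S2=1)) · H[Y2 | (Z,S1,S2)]. -/

import Mathlib

open Finset
open scoped Classical

/-- Probability of an event under a probability mass function on a finite sample space. -/
noncomputable def pr {Ω : Type} [Fintype Ω] (p : Ω → ℝ) (E : Ω → Prop) : ℝ :=
  ∑ ω, if E ω then p ω else 0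

/-- Conditional Shannon entropy `H[X | Y] = Σ_y P(Y=y) · H[X | Y=y]`
(natural logarithm), for finite-valued random variables on a finite sample space. -/
noncomputable def condEnt {Ω : Type} [Fintype Ω] {α β : Type} [Fintype α] [Fintype β]
    (p : Ω → ℝ) (X : Ω → α) (Y : Ω → β) : ℝ :=
  ∑ y : β, pr p (fun ω => Y ω = y) *
    ∑ x : α, Real.negMulLog
      (pr p (fun ω => X ω = x ∧ Y ω = y) / pr p (fun ω => Y ω = y))

namespace ErasureAux

variable {Ω : Type} [Fintype Ω]

lemma pr_nonneg (p : Ω → ℝ) (hp : ∀ ω, 0 ≤ p ω) (E : Ω → Prop) : 0 ≤ pr p E :=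
  Finset.sum_nonneg fun ω _ => by by_cases h : E ω <;> simp [pr, h, hp ω]

lemma pr_congr (p : Ω → ℝ) {E F : Ω → Prop} (h : ∀ ω, E ω ↔ F ω) : pr p E = pr p F :=
  Finset.sum_congr rfl fun ω _ => by simp only [h ω]

lemma pr_mono (p : Ω → ℝ) (hp : ∀ ω, 0 ≤ p ω) {E F : Ω → Prop} (h : ∀ ω, E ω → F ω) :
    pr p E ≤ pr p F := by
  refine Finset.sum_le_sum fun ω _ => ?_
  by_cases hE : E ω
  · simp [hE, h ω hE]
  · by_cases hF : F ω <;> simp [hE, hF, hp ω]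

lemma pr_false (p : Ω → ℝ) : pr p (fun _ => False) = 0 := by simp [pr]

lemma pr_split {α : Type} [Fintype α] (p : Ω → ℝ) (E : Ω → Prop) (X : Ω → α) :
    pr p E = ∑ a : α, pr p (fun ω => E ω ∧ X ω = a) := by
  unfold pr
  rw [Finset.sum_comm]
  refine Finset.sum_congr rfl fun ω _ => ?_
  by_cases h : E ω <;> simp [h]

lemma sum_zmod2 (f : ZMod 2 → ℝ) : ∑ x : ZMod 2, f x = f 0 + f 1 := by
  show ∑ x : Fin 2, f x = f 0 + f 1
  exact Fin.sum_univ_two f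

end ErasureAux

open ErasureAux in
/-- Single-letter form of Claim 2: for erasure channels `Y1 = S1·X`, `Y2 = S2·X` with
states `(S1,S2)` independent of `(X,Z)` and `P(S2=1) > 0`,
`H[Y1 | (Z,S1,S2)] ≤ (P(S1=1 or S2=1)/P(S2=1)) · H[Y2 | (Z,S1,S2)]`. -/
theorem erasure_condEntropy_ratio {Ω γ : Type} [Fintype Ω] [Fintype γ]
    (p : Ω → ℝ) (hp : ∀ ω, 0 ≤ p ω) (hsum : ∑ ω, p ω = 1)
    (X : Ω → ZMod 2) (Z : Ω → γ) (S1 S2 : Ω → Bool)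
    (hindep : ∀ (s1 s2 : Bool) (x : ZMod 2) (z : γ),
      pr p (fun ω => (S1 ω = s1 ∧ S2 ω = s2) ∧ X ω = x ∧ Z ω = z)
        = pr p (fun ω => S1 ω = s1 ∧ S2 ω = s2) *
          pr p (fun ω => X ω = x ∧ Z ω = z))
    (hS2pos : 0 < pr p (fun ω => S2 ω = true)) :
    condEnt p (fun ω => (if S1 ω then X ω else 0 : ZMod 2))
        (fun ω => (Z ω, S1 ω, S2 ω))
      ≤ (pr p (fun ω => S1 ω = true ∨ S2 ω = true) / pr p (fun ω => S2 ω = true)) *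
        condEnt p (fun ω => (if S2 ω then X ω else 0 : ZMod 2))
          (fun ω => (Z ω, S1 ω, S2 ω)) := by
  classical
  set q : ZMod 2 → γ → ℝ := fun x z => pr p (fun ω => X ω = x ∧ Z ω = z) with hq
  set r : γ → ℝ := fun z => pr p (fun ω => Z ω = z) with hr
  set A : Bool → Bool → ℝ := fun s1 s2 => pr p (fun ω => S1 ω = s1 ∧ S2 ω = s2) with hA
  set Hz : γ → ℝ := fun z => ∑ x : ZMod 2, Real.negMulLog (q x z / r z) with hHz
  -- r z = ∑ x, q x z
  have hrq : ∀ z, r z = ∑ x : ZMod 2, q x z := by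
    intro z
    show pr p (fun ω => Z ω = z) = ∑ x : ZMod 2, q x z
    rw [pr_split p (fun ω => Z ω = z) X]
    refine Finset.sum_congr rfl fun x _ => pr_congr p fun ω => and_comm
  -- joint probability of (Z,S1,S2)
  have hW : ∀ (z : γ) (s1 s2 : Bool),
      pr p (fun ω => (Z ω, S1 ω, S2 ω) = (z, s1, s2)) = A s1 s2 * r z := by
    intro z s1 s2
    have h1 : pr p (fun ω => (Z ω, S1 ω, S2 ω) = (z, s1, s2))
        = ∑ x : ZMod 2, pr p (fun ω => (S1 ω = s1 ∧ S2 ω = s2) ∧ X ω = x ∧ Z ω = z) := by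
      rw [pr_split p _ X]
      refine Finset.sum_congr rfl fun x _ => pr_congr p fun ω => ?_
      simp only [Prod.mk.injEq]
      tauto
    rw [h1]
    simp only [hindep]
    rw [← Finset.mul_sum, ← hrq]
  -- key per-cell entropy computation, for the "on" channel
  have hon : ∀ (Y : Ω → ZMod 2) (z : γ) (s1 s2 : Bool),
      (∀ x : ZMod 2, pr p (fun ω => Y ω = x ∧ (Z ω, S1 ω, S2 ω) = (z, s1, s2))
         = A s1 s2 * q x z) →
      pr p (fun ω => (Z ω, S1 ω, S2 ω) = (z, s1, s2)) *
        ∑ x : ZMod 2, Real.negMulLog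
          (pr p (fun ω => Y ω = x ∧ (Z ω, S1 ω, S2 ω) = (z, s1, s2)) /
            pr p (fun ω => (Z ω, S1 ω, S2 ω) = (z, s1, s2)))
        = A s1 s2 * (r z * Hz z) := by
    intro Y z s1 s2 hY
    rw [hW]
    simp only [hY]
    by_cases hA0 : A s1 s2 = 0
    · simp [hA0]
    · have : ∀ x : ZMod 2, A s1 s2 * q x z / (A s1 s2 * r z) = q x z / r z := fun x =>
        mul_div_mul_left _ _ hA0
      simp only [this]
      rw [hHz]
      ring
  -- key per-cell entropy computation, for the "off" channel
  have hoff : ∀ (Y : Ω → ZMod 2) (z : γ) (s1 s2 : Bool),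
      (∀ x : ZMod 2, pr p (fun ω => Y ω = x ∧ (Z ω, S1 ω, S2 ω) = (z, s1, s2))
         = if x = 0 then A s1 s2 * r z else 0) →
      pr p (fun ω => (Z ω, S1 ω, S2 ω) = (z, s1, s2)) *
        ∑ x : ZMod 2, Real.negMulLog
          (pr p (fun ω => Y ω = x ∧ (Z ω, S1 ω, S2 ω) = (z, s1, s2)) /
            pr p (fun ω => (Z ω, S1 ω, S2 ω) = (z, s1, s2)))
        = 0 := by
    intro Y z s1 s2 hY
    rw [hW]
    simp only [hY]
    by_cases ht : A s1 s2 * r z = 0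
    · simp [ht]
    · rw [sum_zmod2]
      norm_num [div_self ht, Real.negMulLog_one, Real.negMulLog_zero]
  -- joint prob of Y_i with the conditioning variables
  have hjon : ∀ (S : Ω → Bool) (s1 s2 : Bool), (∀ ω, (S1 ω = s1 ∧ S2 ω = s2) → S ω = true) →
      ∀ (x : ZMod 2) (z : γ),
      pr p (fun ω => (if S ω then X ω else 0) = x ∧ (Z ω, S1 ω, S2 ω) = (z, s1, s2))
        = A s1 s2 * q x z := by
    intro S s1 s2 hS x z
    rw [← hindep]
    refine pr_congr p fun ω => ?_
    simp only [Prod.mk.injEq]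
    constructor
    · rintro ⟨h1, h2, h3, h4⟩
      rw [hS ω ⟨h3, h4⟩] at h1
      simp at h1
      exact ⟨⟨h3, h4⟩, h1, h2⟩
    · rintro ⟨⟨h3, h4⟩, h1, h2⟩
      rw [hS ω ⟨h3, h4⟩]
      simp [h1, h2, h3, h4]
  have hjoff : ∀ (S : Ω → Bool) (s1 s2 : Bool), (∀ ω, (S1 ω = s1 ∧ S2 ω = s2) → S ω = false) →
      ∀ (x : ZMod 2) (z : γ),
      pr p (fun ω => (if S ω then X ω else 0) = x ∧ (Z ω, S1 ω, S2 ω) = (z, s1, s2))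
        = if x = 0 then A s1 s2 * r z else 0 := by
    intro S s1 s2 hS x z
    by_cases hx : x = 0
    · rw [if_pos hx, ← hW]
      refine pr_congr p fun ω => ?_
      simp only [Prod.mk.injEq]
      constructor
      · tauto
      · rintro ⟨h2, h3, h4⟩
        rw [hS ω ⟨h3, h4⟩]
        simp [hx, h2, h3, h4]
    · rw [if_neg hx, ← pr_false p]
      refine pr_congr p fun ω => ?_
      simp only [Prod.mk.injEq, iff_false]
      rintro ⟨h1, h2, h3, h4⟩
      rw [hS ω ⟨h3, h4⟩] at h1
      simp at h1
      exact hx h1.symm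
  have hsum3 : ∀ F : γ × Bool × Bool → ℝ, (∑ y, F y) = ∑ z, ∑ s1 : Bool, ∑ s2 : Bool, F (z, s1, s2) := by
    intro F
    rw [Fintype.sum_prod_type]
    exact Finset.sum_congr rfl fun z _ => Fintype.sum_prod_type _
  -- compute the two conditional entropies
  have hE1 : condEnt p (fun ω => (if S1 ω then X ω else 0 : ZMod 2))
      (fun ω => (Z ω, S1 ω, S2 ω)) = (∑ s2 : Bool, A true s2) * (∑ z, r z * Hz z) := by
    rw [condEnt, hsum3]
    have key : ∀ (z : γ) (s1 s2 : Bool),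
        pr p (fun ω => (Z ω, S1 ω, S2 ω) = (z, s1, s2)) *
          ∑ x : ZMod 2, Real.negMulLog
            (pr p (fun ω => (if S1 ω then X ω else 0 : ZMod 2) = x ∧
                (Z ω, S1 ω, S2 ω) = (z, s1, s2)) /
              pr p (fun ω => (Z ω, S1 ω, S2 ω) = (z, s1, s2)))
          = if s1 = true then A s1 s2 * (r z * Hz z) else 0 := by
      intro z s1 s2
      cases s1 with
      | true =>
        rw [if_pos rfl]
        exact hon _ z true s2 (hjon S1 true s2 (fun ω h => h.1) · z)
      | false =>
        rw [if_neg (by simp)]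
        exact hoff _ z false s2 (hjoff S1 false s2 (fun ω h => h.1) · z)
    simp only [key]
    rw [Finset.mul_sum]
    refine Finset.sum_congr rfl fun z _ => ?_
    rw [Fintype.sum_bool]
    simp [Finset.sum_mul]
    ring
  have hE2 : condEnt p (fun ω => (if S2 ω then X ω else 0 : ZMod 2))
      (fun ω => (Z ω, S1 ω, S2 ω)) = (∑ s1 : Bool, A s1 true) * (∑ z, r z * Hz z) := by
    rw [condEnt, hsum3]
    have key : ∀ (z : γ) (s1 s2 : Bool),
        pr p (fun ω => (Z ω, S1 ω, S2 ω) = (z, s1, s2)) *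
          ∑ x : ZMod 2, Real.negMulLog
            (pr p (fun ω => (if S2 ω then X ω else 0 : ZMod 2) = x ∧
                (Z ω, S1 ω, S2 ω) = (z, s1, s2)) /
              pr p (fun ω => (Z ω, S1 ω, S2 ω) = (z, s1, s2)))
          = if s2 = true then A s1 s2 * (r z * Hz z) else 0 := by
      intro z s1 s2
      cases s2 with
      | true =>
        rw [if_pos rfl]
        exact hon _ z s1 true (hjon S2 s1 true (fun ω h => h.2) · z)
      | false =>
        rw [if_neg (by simp)]
        exact hoff _ z s1 false (hjoff S2 s1 false (fun ω h => h.2) · z)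
    simp only [key]
    rw [Finset.mul_sum]
    refine Finset.sum_congr rfl fun z _ => ?_
    simp only [Fintype.sum_bool]
    simp [Finset.sum_mul]
    ring
  -- identify marginals
  have hP1 : (∑ s2 : Bool, A true s2) = pr p (fun ω => S1 ω = true) := by
    rw [pr_split p (fun ω => S1 ω = true) S2]
  have hP2 : (∑ s1 : Bool, A s1 true) = pr p (fun ω => S2 ω = true) := by
    rw [pr_split p (fun ω => S2 ω = true) S1]
    rw [Fintype.sum_bool, Fintype.sum_bool]
    rw [pr_congr p (fun ω => (and_comm : S2 ω = true ∧ S1 ω = true ↔ _)),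
      pr_congr p (fun ω => (and_comm : S2 ω = true ∧ S1 ω = false ↔ _))]
  -- nonnegativity of H[X|Z]
  have hHXZ : 0 ≤ ∑ z, r z * Hz z := by
    refine Finset.sum_nonneg fun z _ => mul_nonneg (pr_nonneg p hp _) ?_
    refine Finset.sum_nonneg fun x _ => ?_
    refine Real.negMulLog_nonneg (div_nonneg (pr_nonneg p hp _) (pr_nonneg p hp _)) ?_
    rcases eq_or_lt_of_le (pr_nonneg p hp (fun ω => Z ω = z)) with h | h
    · have hr0 : r z = 0 := h.symm
      show q x z / r z ≤ 1
      rw [hr0, div_zero]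
      norm_num
    · exact div_le_one_of_le₀ (pr_mono p hp fun ω hE => hE.2) (le_of_lt h)
  rw [hE1, hE2, hP1, hP2]
  have hcancel : pr p (fun ω => S1 ω = true ∨ S2 ω = true) / pr p (fun ω => S2 ω = true) *
      (pr p (fun ω => S2 ω = true) * (∑ z, r z * Hz z))
      = pr p (fun ω => S1 ω = true ∨ S2 ω = true) * (∑ z, r z * Hz z) := by
    field_simp
  rw [hcancel]
  exact mul_le_mul_of_nonneg_right (pr_mono p hp fun ω h => Or.inl h) hHXZ
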